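/- Let L/K be a finite Galois extension of fields, G a group, and ρ: G → GL_n(L) a representation such that for every γ ∈ Gal(L/K) there exists a character ε_γ: G → L^× with γ∘ρ = ρ ⊗ ε_γ (equality of maps, γ applied entrywise). Then for every g ∈ G there exists a scalar a_g ∈ L^× such that all entries of the matrix a_g·ρ(g) lie in K; in particular the projective representation ρ^proj: G → PGL_n(L) (composition of ρ with the quotient GL_n(L) → GL_n(L)/L^×) takes its values in the image of GL_n(K), i.e. factors through PGL_n(K). -/

import Mathlib

open Matrix

noncomputable section

theorem fixed_mem_range_algebraMap
    {K L : Type*} [Field K] [Field L] [Algebra K L]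
    [FiniteDimensional K L] [IsGalois K L] (x : L)
    (hx : ∀ γ : L ≃ₐ[K] L, γ x = x) : ∃ k : K, algebraMap K L k = x := by
  have h : IntermediateField.fixingSubgroup (⊥ : IntermediateField K L) = ⊤ := by
    ext γ
    simp only [Subgroup.mem_top, iff_true]
    rintro ⟨y, hy⟩
    obtain ⟨k, rfl⟩ := IntermediateField.mem_bot.mp hy
    exact γ.commutes k
  have h2 := IsGalois.fixedField_fixingSubgroup (⊥ : IntermediateField K L)
  rw [h] at h2
  have hx' : x ∈ IntermediateField.fixedField (⊤ : Subgroup (L ≃ₐ[K] L)) := by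
    intro γ; exact hx γ
  rw [h2] at hx'
  exact IntermediateField.mem_bot.mp hx'

/-- (Hilbert 90 application.) If for every `γ ∈ Gal(L/K)` there is a character
`ε_γ` with `γ∘ρ = ρ ⊗ ε_γ`, then each `ρ(g)` can be scaled by some `a_g ∈ L^×` so
that all entries lie in `K`; in particular the projective representation factors
through `PGL_n(K)`. -/
theorem proj_rep_defined_over_base
    {K L : Type*} [Field K] [Field L] [Algebra K L]
    [FiniteDimensional K L] [IsGalois K L]
    {G : Type*} [Group G] {n : ℕ}
    (ρ : G →* Matrix (Fin n) (Fin n) L)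
    (htwist : ∀ γ : L ≃ₐ[K] L, ∃ ε : G →* Lˣ,
      ∀ g, (ρ g).map ⇑γ = (ε g : L) • ρ g) :
    ∀ g : G, ∃ a : Lˣ, ∀ i j, ∃ k : K,
      algebraMap K L k = (a : L) * ρ g i j := by
  intro g
  rcases Nat.eq_zero_or_pos n with hn | hn
  · exact ⟨1, fun i _ => absurd (i.2) (by omega)⟩
  -- find a nonzero entry
  have hinv : ρ g * ρ g⁻¹ = 1 := by rw [← _root_.map_mul, mul_inv_cancel, _root_.map_one]
  have hne : ∃ i₀ j₀, ρ g i₀ j₀ ≠ 0 := by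
    by_contra h
    push_neg at h
    have hzero : ρ g = 0 := by ext i j; exact h i j
    have i₀ : Fin n := ⟨0, hn⟩
    have := congrFun (congrFun hinv i₀) i₀
    rw [hzero] at this
    simp [Matrix.one_apply] at this
  obtain ⟨i₀, j₀, hc⟩ := hne
  refine ⟨(Units.mk0 (ρ g i₀ j₀) hc)⁻¹, fun i j => ?_⟩
  apply fixed_mem_range_algebraMap
  intro γ
  obtain ⟨ε, hε⟩ := htwist γ
  have h1 : γ (ρ g i j) = (ε g : L) * ρ g i j := by
    have := congrFun (congrFun (hε g) i) j
    simpa [Matrix.map_apply] using this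
  have h0 : γ (ρ g i₀ j₀) = (ε g : L) * ρ g i₀ j₀ := by
    have := congrFun (congrFun (hε g) i₀) j₀
    simpa [Matrix.map_apply] using this
  have hεne : (ε g : L) ≠ 0 := (ε g).ne_zero
  simp only [Units.val_inv_eq_inv_val, Units.val_mk0, _root_.map_mul, map_inv₀, h1, h0]
  field_simp
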